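/- Let X be a normal mean-variance mixture X = μ + Στ W + √W Z with Z ~ N(0, Σ), W ~ GIG(λ, 1, ψ) independent of Z, and write γ = Στ. If μ = -L(τ,ψ,λ) τ and Σ = (√ψ / M_{λ+1}(√ψ)) (I_N + ((L(τ,ψ,λ)-1)/(τ'τ)) ττ'), where M_{λ+1}(√ψ) = K_{λ+1}(√ψ)/K_λ(√ψ), N_{λ+2}(√ψ) = K_{λ+2}(√ψ)K_λ(√ψ)/K_{λ+1}(√ψ)^2, and L(τ,ψ,λ) = (√(1 + 4(N_{λ+2}(√ψ)-1) τ'τ) - 1)/(2 τ'τ (N_{λ+2}(√ψ)-1)), then E(X) = 0 and Var(X) = I_N. -/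

import Mathlib

open MeasureTheory ProbabilityTheory Matrix

lemma aux_mul_int {Ω : Type*} [MeasureSpace Ω] [IsProbabilityMeasure (ℙ : Measure Ω)]
    {f g : Ω → ℝ} (hf : MemLp f 2 ℙ) (hg : MemLp g 2 ℙ) :
    Integrable (fun ω => f ω * g ω) ℙ := by
  refine (hf.integrable_sq.add hg.integrable_sq).mono' (hf.1.mul hg.1)
    (Filter.Eventually.of_forall fun ω => ?_)
  simp only [Pi.add_apply, Real.norm_eq_abs, abs_mul]
  nlinarith [sq_nonneg (|f ω| - |g ω|), abs_nonneg (f ω), abs_nonneg (g ω),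
    sq_abs (f ω), sq_abs (g ω)]

/-- Standardisation of the generalised hyperbolic distribution (Proposition 1):
`X = μ + Στ W + √W Z` with `Z` mean-zero with covariance `Σ`, independent of
`W ~ GIG(λ, 1, ψ)` (whose moments are the Bessel ratios `E W = K_{λ+1}(√ψ)/(K_λ(√ψ)√ψ)`,
`E W² = K_{λ+2}(√ψ)/(K_λ(√ψ)ψ)`).  If `μ = -L(τ,ψ,λ) τ` and
`Σ = (√ψ / M_{λ+1}(√ψ)) (I + ((L-1)/(τ'τ)) ττ')`, then `E X = 0` and `Var X = I`. -/
theorem stmt6 {Ω : Type*} [MeasureSpace Ω] [IsProbabilityMeasure (ℙ : Measure Ω)]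
    {N : ℕ} (W : Ω → ℝ) (Z X : Ω → Fin N → ℝ)
    (τ : Fin N → ℝ) (ψ lam Kl Kl1 Kl2 : ℝ)
    (hψ : 0 < ψ) (hτ : τ ≠ 0)
    (hKl : 0 < Kl) (hKl1 : 0 < Kl1) (hKl2 : 0 < Kl2)
    -- `N_{λ+2}(√ψ) > 1`, i.e. `Var W > 0` (a property of the Bessel ratios)
    (hN2 : Kl1 ^ 2 < Kl2 * Kl)
    (M Nn L : ℝ)
    (hM : M = Kl1 / Kl)
    (hNn : Nn = Kl2 * Kl / Kl1 ^ 2)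
    (hL : L = (Real.sqrt (1 + 4 * (Nn - 1) * (τ ⬝ᵥ τ)) - 1) /
        (2 * (τ ⬝ᵥ τ) * (Nn - 1)))
    (μv : Fin N → ℝ) (Sig : Matrix (Fin N) (Fin N) ℝ)
    (hμ : μv = -(L • τ))
    (hSig : Sig = (Real.sqrt ψ / M) •
        ((1 : Matrix (Fin N) (Fin N) ℝ) + ((L - 1) / (τ ⬝ᵥ τ)) • Matrix.vecMulVec τ τ))
    (hWpos : ∀ ω, 0 < W ω)
    (hWmem : MemLp W 2 ℙ) (hZmem : ∀ i, MemLp (fun ω => Z ω i) 2 ℙ)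
    (hInd : IndepFun W Z ℙ)
    (hZmean : ∀ i, ∫ ω, Z ω i = 0)
    (hZcov : ∀ i j, ∫ ω, Z ω i * Z ω j = Sig i j)
    (hW1 : ∫ ω, W ω = Kl1 / (Kl * Real.sqrt ψ))
    (hW2 : ∫ ω, (W ω) ^ 2 = Kl2 / (Kl * ψ))
    (hX : ∀ ω i, X ω i = μv i + (Sig.mulVec τ) i * W ω + Real.sqrt (W ω) * Z ω i) :
    (∀ i, ∫ ω, X ω i = 0) ∧
    (∀ i j, (∫ ω, X ω i * X ω j) - (∫ ω, X ω i) * (∫ ω, X ω j)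
        = if i = j then 1 else 0) := by
  -- basic positivity
  set t : ℝ := τ ⬝ᵥ τ with htdef
  have ht0 : 0 ≤ t := by
    rw [htdef, dotProduct]
    exact Finset.sum_nonneg fun i _ => mul_self_nonneg _
  have htne : t ≠ 0 := fun h => hτ (dotProduct_self_eq_zero.mp h)
  have ht : 0 < t := lt_of_le_of_ne ht0 (Ne.symm htne)
  have hsψ : 0 < Real.sqrt ψ := Real.sqrt_pos.mpr hψ
  have hM0 : 0 < M := by rw [hM]; positivity
  have hNn1 : 1 < Nn := by
    rw [hNn]
    rw [lt_div_iff₀ (by positivity)]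
    linarith
  set c : ℝ := Real.sqrt ψ / M with hcdef
  have hc0 : 0 < c := by positivity
  -- the key quadratic identity for L
  have hNne : Nn - 1 ≠ 0 := by linarith
  have hkey : t * (Nn - 1) * L ^ 2 + L - 1 = 0 := by
    set s : ℝ := Real.sqrt (1 + 4 * (Nn - 1) * t) with hsdef
    have hs : s * s = 1 + 4 * (Nn - 1) * t :=
      Real.mul_self_sqrt (by nlinarith)
    have hexp : t * (Nn - 1) * L ^ 2 + L - 1
        = (s * s - (1 + 4 * (Nn - 1) * t)) / (4 * (t * (Nn - 1))) := by
      rw [hL]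
      field_simp
      ring
    rw [hexp, hs]
    simp
  -- entries of Sig and of Sig.mulVec τ
  have hSigE : ∀ i j, Sig i j = c * ((if i = j then 1 else 0) + (L - 1) / t * (τ i * τ j)) := by
    intro i j
    rw [hSig]
    simp [Matrix.smul_apply, Matrix.add_apply, Matrix.one_apply, Matrix.vecMulVec_apply,
      smul_eq_mul, mul_comm]
  have hγ : ∀ i, (Sig.mulVec τ) i = c * L * τ i := by
    intro i
    rw [Matrix.mulVec, dotProduct]
    have : ∀ j, Sig i j * τ j
        = (if j = i then c * τ j else 0) + c * (L - 1) / t * τ i * (τ j * τ j) := by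
      intro j
      rw [hSigE i j]
      by_cases h : i = j <;> simp [h, eq_comm] <;> ring
    simp_rw [this]
    rw [Finset.sum_add_distrib, Finset.sum_ite_eq' Finset.univ i (fun j => c * τ j),
      ← Finset.mul_sum]
    have hsum : ∑ j, τ j * τ j = t := rfl
    rw [hsum]
    simp only [Finset.mem_univ, if_true]
    field_simp
    ring
  -- integrability facts
  have iW : Integrable W ℙ := hWmem.integrable one_le_two
  have iW2 : Integrable (fun ω => (W ω) ^ 2) ℙ := hWmem.integrable_sq
  have iZ : ∀ i, Integrable (fun ω => Z ω i) ℙ := fun i => (hZmem i).integrable one_le_two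
  have iZZ : ∀ i j, Integrable (fun ω => Z ω i * Z ω j) ℙ :=
    fun i j => aux_mul_int (hZmem i) (hZmem j)
  have msW : AEStronglyMeasurable (fun ω => Real.sqrt (W ω)) ℙ :=
    Real.continuous_sqrt.comp_aestronglyMeasurable hWmem.1
  have isW : Integrable (fun ω => Real.sqrt (W ω)) ℙ := by
    refine ((integrable_const (1:ℝ)).add iW).mono' msW
      (Filter.Eventually.of_forall fun ω => ?_)
    have h1 := Real.sq_sqrt (hWpos ω).le
    have h2 := Real.sqrt_nonneg (W ω)
    simp only [Pi.add_apply, Real.norm_eq_abs, abs_of_nonneg h2]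
    nlinarith [sq_nonneg (Real.sqrt (W ω) - 1)]
  have iWsW : Integrable (fun ω => W ω * Real.sqrt (W ω)) ℙ := by
    refine ((integrable_const (1:ℝ)).add iW2).mono' (hWmem.1.mul msW)
      (Filter.Eventually.of_forall fun ω => ?_)
    set s := Real.sqrt (W ω) with hs
    have h1 : s ^ 2 = W ω := Real.sq_sqrt (hWpos ω).le
    have h2 : 0 ≤ s := Real.sqrt_nonneg _
    have h3 : 0 ≤ W ω := (hWpos ω).le
    simp only [Pi.add_apply, Real.norm_eq_abs, abs_of_nonneg (mul_nonneg h3 h2)]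
    nlinarith [sq_nonneg (s ^ 2 - s), sq_nonneg (s ^ 2 - 1)]
  -- independence consequences
  have indsW : ∀ i, IndepFun (fun ω => Real.sqrt (W ω)) (fun ω => Z ω i) ℙ :=
    fun i => hInd.comp Real.continuous_sqrt.measurable (measurable_pi_apply i)
  have indWsW : ∀ i, IndepFun (fun ω => W ω * Real.sqrt (W ω)) (fun ω => Z ω i) ℙ :=
    fun i => hInd.comp (measurable_id.mul Real.continuous_sqrt.measurable) (measurable_pi_apply i)
  have indWZZ : ∀ i j, IndepFun W (fun ω => Z ω i * Z ω j) ℙ :=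
    fun i j => hInd.comp measurable_id ((measurable_pi_apply i).mul (measurable_pi_apply j))
  have isWZ : ∀ i, Integrable (fun ω => Real.sqrt (W ω) * Z ω i) ℙ :=
    fun i => (indsW i).integrable_mul isW (iZ i)
  have iWsWZ : ∀ i, Integrable (fun ω => W ω * Real.sqrt (W ω) * Z ω i) ℙ :=
    fun i => (indWsW i).integrable_mul iWsW (iZ i)
  have iWZZ : ∀ i j, Integrable (fun ω => W ω * (Z ω i * Z ω j)) ℙ :=
    fun i j => (indWZZ i j).integrable_mul iW (iZZ i j)
  have int_sWZ : ∀ i, ∫ ω, Real.sqrt (W ω) * Z ω i = 0 := by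
    intro i
    have h2 : ∫ ω, Real.sqrt (W ω) * Z ω i
        = (∫ ω, Real.sqrt (W ω)) * ∫ ω, Z ω i :=
      (indsW i).integral_fun_mul_eq_mul_integral isW.1 (iZ i).1
    rw [h2, hZmean i, mul_zero]
  have int_WsWZ : ∀ i, ∫ ω, W ω * Real.sqrt (W ω) * Z ω i = 0 := by
    intro i
    have h2 : ∫ ω, W ω * Real.sqrt (W ω) * Z ω i
        = (∫ ω, W ω * Real.sqrt (W ω)) * ∫ ω, Z ω i :=
      (indWsW i).integral_fun_mul_eq_mul_integral iWsW.1 (iZ i).1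
    rw [h2, hZmean i, mul_zero]
  have int_WZZ : ∀ i j, ∫ ω, W ω * (Z ω i * Z ω j) = (∫ ω, W ω) * Sig i j := by
    intro i j
    have h2 : ∫ ω, W ω * (Z ω i * Z ω j)
        = (∫ ω, W ω) * ∫ ω, Z ω i * Z ω j :=
      (indWZZ i j).integral_fun_mul_eq_mul_integral iW.1 (iZZ i j).1
    rw [h2, hZcov i j]
  -- first moments
  have hmean : ∀ i, ∫ ω, X ω i = 0 := by
    intro i
    have hsplit : ∫ ω, X ω i
        = μv i + (Sig.mulVec τ) i * (∫ ω, W ω) + ∫ ω, Real.sqrt (W ω) * Z ω i := by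
      simp_rw [hX]
      have ic1 : Integrable (fun ω => μv i + (Sig.mulVec τ) i * W ω) ℙ :=
        (integrable_const _).add (iW.const_mul _)
      rw [integral_add ic1 (isWZ i),
        integral_add (integrable_const _) (iW.const_mul _), integral_const,
        integral_const_mul]
      simp
    rw [hsplit, int_sWZ i, hγ i, hW1, hμ]
    simp only [Pi.neg_apply, Pi.smul_apply, smul_eq_mul]
    rw [hcdef, hM]
    field_simp
    ring
  refine ⟨hmean, fun i j => ?_⟩
  rw [hmean i, hmean j, zero_mul, sub_zero]
  set γ : Fin N → ℝ := Sig.mulVec τ with hγdef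
  have hprod : ∀ ω, X ω i * X ω j =
      (μv i * μv j
      + (μv i * γ j + μv j * γ i) * W ω)
      + (γ i * γ j) * (W ω) ^ 2
      + (μv i * (Real.sqrt (W ω) * Z ω j)
      + μv j * (Real.sqrt (W ω) * Z ω i))
      + (γ i * (W ω * Real.sqrt (W ω) * Z ω j)
      + γ j * (W ω * Real.sqrt (W ω) * Z ω i))
      + W ω * (Z ω i * Z ω j) := by
    intro ω
    have hs : Real.sqrt (W ω) * Real.sqrt (W ω) = W ω := Real.mul_self_sqrt (hWpos ω).le
    rw [hX, hX]
    linear_combination (Z ω i * Z ω j) * hs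
  have I1 : Integrable (fun ω => μv i * μv j + (μv i * γ j + μv j * γ i) * W ω) ℙ :=
    (integrable_const _).add (iW.const_mul _)
  have I2 : Integrable (fun ω => (γ i * γ j) * (W ω) ^ 2) ℙ := iW2.const_mul _
  have I3 : Integrable (fun ω => μv i * (Real.sqrt (W ω) * Z ω j)
      + μv j * (Real.sqrt (W ω) * Z ω i)) ℙ :=
    ((isWZ j).const_mul _).add ((isWZ i).const_mul _)
  have I4 : Integrable (fun ω => γ i * (W ω * Real.sqrt (W ω) * Z ω j)
      + γ j * (W ω * Real.sqrt (W ω) * Z ω i)) ℙ :=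
    ((iWsWZ j).const_mul _).add ((iWsWZ i).const_mul _)
  have I5 : Integrable (fun ω => W ω * (Z ω i * Z ω j)) ℙ := iWZZ i j
  have hsplit : ∫ ω, X ω i * X ω j
      = (μv i * μv j + (μv i * γ j + μv j * γ i) * (∫ ω, W ω))
      + (γ i * γ j) * (∫ ω, (W ω) ^ 2)
      + (μv i * (∫ ω, Real.sqrt (W ω) * Z ω j) + μv j * (∫ ω, Real.sqrt (W ω) * Z ω i))
      + (γ i * (∫ ω, W ω * Real.sqrt (W ω) * Z ω j)
        + γ j * (∫ ω, W ω * Real.sqrt (W ω) * Z ω i))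
      + ∫ ω, W ω * (Z ω i * Z ω j) := by
    simp_rw [hprod]
    have J1 : Integrable (fun ω =>
        (μv i * μv j + (μv i * γ j + μv j * γ i) * W ω)
        + (γ i * γ j) * (W ω) ^ 2) ℙ := I1.add I2
    have J2 : Integrable (fun ω =>
        (μv i * μv j + (μv i * γ j + μv j * γ i) * W ω)
        + (γ i * γ j) * (W ω) ^ 2
        + (μv i * (Real.sqrt (W ω) * Z ω j) + μv j * (Real.sqrt (W ω) * Z ω i))) ℙ :=
      J1.add I3
    have J3 : Integrable (fun ω =>
        (μv i * μv j + (μv i * γ j + μv j * γ i) * W ω)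
        + (γ i * γ j) * (W ω) ^ 2
        + (μv i * (Real.sqrt (W ω) * Z ω j) + μv j * (Real.sqrt (W ω) * Z ω i))
        + (γ i * (W ω * Real.sqrt (W ω) * Z ω j)
        + γ j * (W ω * Real.sqrt (W ω) * Z ω i))) ℙ := J2.add I4
    rw [integral_add J3 I5,
      integral_add J2 I4,
      integral_add J1 I3, integral_add I1 I2,
      integral_add (integrable_const _) (iW.const_mul _),
      integral_const, integral_const_mul, integral_const_mul,
      integral_add ((isWZ j).const_mul _) ((isWZ i).const_mul _),
      integral_const_mul, integral_const_mul,
      integral_add ((iWsWZ j).const_mul _) ((iWsWZ i).const_mul _),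
      integral_const_mul, integral_const_mul]
    simp
  rw [hsplit, int_sWZ, int_sWZ, int_WsWZ, int_WsWZ, int_WZZ i j, hW1, hW2,
    hSigE i j, hγ i, hγ j, hμ]
  simp only [Pi.neg_apply, Pi.smul_apply, smul_eq_mul, mul_zero, add_zero, zero_add]
  have e1 : c * (Kl1 / (Kl * Real.sqrt ψ)) = 1 := by
    rw [hcdef, hM]; field_simp
  have e2 : c ^ 2 * (Kl2 / (Kl * ψ)) = Nn := by
    rw [hcdef, hM, hNn]
    rw [div_pow, Real.sq_sqrt hψ.le]
    field_simp
  have hkey2 : (Nn - 1) * L ^ 2 + (L - 1) / t = 0 := by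
    have hh : (Nn - 1) * L ^ 2 + (L - 1) / t
        = (t * (Nn - 1) * L ^ 2 + L - 1) / t := by field_simp; ring
    rw [hh, hkey, zero_div]
  by_cases h : i = j
  · subst h
    simp only [if_true]
    linear_combination (-2 * L ^ 2 * (τ i * τ i) + 1 + (L - 1) * (τ i * τ i) / t) * e1
      + (L ^ 2 * (τ i * τ i)) * e2 + (τ i * τ i) * hkey2
  · simp only [h, if_false]
    linear_combination (-2 * L ^ 2 * (τ i * τ j) + (L - 1) * (τ i * τ j) / t) * e1
      + (L ^ 2 * (τ i * τ j)) * e2 + (τ i * τ j) * hkey2
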